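/- Let B be a C*-algebra, E a Hilbert B-module, and K a closed linear subspace of E such that x·⟨y,k⟩ ∈ K for all x, y ∈ E, k ∈ K, and k·⟨x,y⟩ ∈ K for all x, y ∈ E, k ∈ K. Then K is a ternary ideal of E, i.e. x·⟨k,y⟩ ∈ K for all x, y ∈ E and k ∈ K. -/

import Mathlib

open scoped RightActions NNReal

/-- The closed linear span of a subset of a topological `ℂ`-module. -/
noncomputable def clSpan {M : Type*} [AddCommMonoid M] [Module ℂ M] [TopologicalSpace M]
    (S : Set M) : Set M :=
  closure (Submodule.span ℂ S : Set M)

/-- A subset is a (complex) linear subspace. -/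
def IsLinearSubspace {M : Type*} [AddCommMonoid M] [Module ℂ M] (K : Set M) : Prop :=
  (0 : M) ∈ K ∧ (∀ x ∈ K, ∀ y ∈ K, x + y ∈ K) ∧ ∀ (c : ℂ), ∀ x ∈ K, c • x ∈ K

/-- A closed two-sided ideal of a C*-algebra `B`. -/
structure IsClosedTwoSidedIdeal {B : Type*} [NonUnitalCStarAlgebra B] (I : Set B) : Prop where
  isClosed : IsClosed I
  subspace : IsLinearSubspace I
  mul_mem_left : ∀ (b : B), ∀ a ∈ I, b * a ∈ I
  mul_mem_right : ∀ (b : B), ∀ a ∈ I, a * b ∈ I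

/-- The Hilbert C⋆-module class as it stood in Mathlib (December 2024): a right `A`-module
(action of `Aᵐᵒᵖ`) with an `A`-valued inner product, `A`-linear on the right. -/
class CStarModuleRight (A E : Type*) [NonUnitalSemiring A] [StarRing A] [Module ℂ A]
    [AddCommGroup E] [Module ℂ E] [PartialOrder A] [SMul Aᵐᵒᵖ E] [Norm A] [Norm E]
    extends Inner A E where
  inner_add_right {x} {y} {z} : inner x (y + z) = inner x y + inner x z
  inner_self_nonneg {x} : 0 ≤ inner x x
  inner_self {x} : inner x x = 0 ↔ x = 0
  inner_op_smul_right {a : A} {x y : E} : inner x (y <• a) = inner x y * a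
  inner_smul_right_complex {z : ℂ} {x} {y} : inner x (z • y) = z • inner x y
  star_inner x y : star (inner x y) = inner y x
  norm_eq_sqrt_norm_inner_self x : ‖x‖ = √‖inner x x‖

section HilbertModule

variable (B : Type*) [NonUnitalCStarAlgebra B] [PartialOrder B] [StarOrderedRing B]
variable {E : Type*} [NormedAddCommGroup E] [NormedSpace ℂ E] [SMul Bᵐᵒᵖ E] [CStarModuleRight B E]

/-- `K ⊆ E` is an *ideal submodule* if it is the closed linear span of
`{x <• i : x ∈ E, i ∈ I}` for some closed two-sided ideal `I` of `B`. -/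
def IsIdealSubmodule (K : Set E) : Prop :=
  ∃ I : Set B, IsClosedTwoSidedIdeal I ∧
    K = clSpan {z : E | ∃ x : E, ∃ i ∈ I, z = x <• i}

/-- A *ternary ideal* of a Hilbert `B`-module `E`: a linear subspace `K` with
`x <• ⟪k, y⟫ ∈ K` for all `x y ∈ E` and `k ∈ K`. -/
def IsTernaryIdeal (K : Set E) : Prop :=
  IsLinearSubspace K ∧ ∀ (x y : E), ∀ k ∈ K, x <• (inner B k y : B) ∈ K

/-- `B_S`: the closed linear span in `B` of all inner products of elements of `S`. -/
noncomputable def rangeIdeal (S : Set E) : Set B :=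
  clSpan {b : B | ∃ k ∈ S, ∃ k' ∈ S, b = (inner B k k' : B)}

/-- The orthogonal complement of a subset of a Hilbert `B`-module. -/
def perp (S : Set E) : Set E :=
  {x : E | ∀ s ∈ S, (inner B x s : B) = 0}

end HilbertModule
section AuxOpSmul

variable {B : Type*} [NonUnitalCStarAlgebra B] [PartialOrder B] [StarOrderedRing B]
variable {E : Type*} [NormedAddCommGroup E] [NormedSpace ℂ E] [SMul Bᵐᵒᵖ E] [CStarModuleRight B E]

omit [StarOrderedRing B] in
lemma CStarModuleRight.inner_sub_right {x y z : E} :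
    (inner B x (y - z) : B) = inner B x y - inner B x z := by
  have h := CStarModuleRight.inner_add_right (A := B) (x := x) (y := y - z) (z := z)
  rw [sub_add_cancel] at h
  exact eq_sub_of_add_eq h.symm

omit [StarOrderedRing B] in
lemma CStarModuleRight.inner_zero_right {x : E} : (inner B x (0 : E) : B) = 0 := by
  have h := CStarModuleRight.inner_add_right (A := B) (x := x) (y := (0 : E)) (z := 0)
  rw [add_zero] at h
  simpa using h

omit [StarOrderedRing B] in
lemma CStarModuleRight.inner_smul_right_real {x y : E} {r : ℝ} :
    (inner B x (r • y) : B) = r • inner B x y := by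
  have h := CStarModuleRight.inner_smul_right_complex (A := B) (z := (r : ℂ)) (x := x) (y := y)
  rwa [Complex.coe_smul, Complex.coe_smul] at h

omit [StarOrderedRing B] in
lemma CStarModuleRight.inner_op_smul_left {a : B} {x y : E} :
    (inner B (x <• a) y : B) = star a * inner B x y := by
  rw [← CStarModuleRight.star_inner (A := B) y (x <• a), CStarModuleRight.inner_op_smul_right,
    star_mul, CStarModuleRight.star_inner]

omit [StarOrderedRing B] in
lemma CStarModuleRight.norm_sq_eq {x : E} : ‖x‖ ^ 2 = ‖(inner B x x : B)‖ := by
  rw [CStarModuleRight.norm_eq_sqrt_norm_inner_self (A := B) x, Real.sq_sqrt (norm_nonneg _)]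

omit [StarOrderedRing B] in
lemma aux_inner_ext
 {u v : E} (h : ∀ z : E, (inner B z u : B) = inner B z v) : u = v := by
  have h2 : (inner B (u - v) (u - v) : B) = 0 := by
    rw [CStarModuleRight.inner_sub_right, h (u - v), sub_self]
  exact sub_eq_zero.mp (CStarModuleRight.inner_self.mp h2)

omit [StarOrderedRing B] in
lemma aux_opsmul_mul (x : E) (a a' : B) : x <• (a * a') = (x <• a) <• a' :=
  aux_inner_ext (B := B) fun z => by
    simp only [CStarModuleRight.inner_op_smul_right, mul_assoc]

omit [StarOrderedRing B] in
lemma aux_opsmul_add (x : E) (a a' : B) : x <• (a + a') = x <• a + x <• a' :=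
  aux_inner_ext (B := B) fun z => by
    simp only [CStarModuleRight.inner_op_smul_right, CStarModuleRight.inner_add_right, mul_add]

omit [StarOrderedRing B] in
lemma aux_opsmul_sub (x : E) (a a' : B) : x <• (a - a') = x <• a - x <• a' :=
  aux_inner_ext (B := B) fun z => by
    simp only [CStarModuleRight.inner_op_smul_right, CStarModuleRight.inner_sub_right, mul_sub]

omit [StarOrderedRing B] in
lemma aux_opsmul_zero (x : E) : x <• (0 : B) = 0 :=
  aux_inner_ext (B := B) fun z => by
    simp only [CStarModuleRight.inner_op_smul_right, mul_zero, CStarModuleRight.inner_zero_right]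

lemma aux_opsmul_smul_real (x : E) (r : ℝ) (a : B) : x <• (r • a) = r • (x <• a) :=
  aux_inner_ext fun z => by
    rw [CStarModuleRight.inner_op_smul_right, CStarModuleRight.inner_smul_right_real,
      CStarModuleRight.inner_op_smul_right, mul_smul_comm]

omit [StarOrderedRing B] in
lemma aux_norm_opsmul_le (x : E) (a : B) : ‖x <• a‖ ≤ ‖x‖ * ‖a‖ := by
  have key : (inner B (x <• a) (x <• a) : B) = star a * ((inner B x x : B) * a) := by
    rw [CStarModuleRight.inner_op_smul_right, CStarModuleRight.inner_op_smul_left, mul_assoc]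
  have h1 : ‖(inner B (x <• a) (x <• a) : B)‖ ≤ (‖x‖ * ‖a‖) ^ 2 := by
    rw [key]
    calc ‖star a * ((inner B x x : B) * a)‖ ≤ ‖star a‖ * ‖(inner B x x : B) * a‖ :=
          norm_mul_le _ _
      _ ≤ ‖star a‖ * (‖(inner B x x : B)‖ * ‖a‖) := by
          gcongr; exact norm_mul_le _ _
      _ = (‖x‖ * ‖a‖) ^ 2 := by
          rw [norm_star, ← CStarModuleRight.norm_sq_eq]; ring
  rw [CStarModuleRight.norm_eq_sqrt_norm_inner_self (A := B) (x := x <• a)]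
  calc Real.sqrt ‖(inner B (x <• a) (x <• a) : B)‖ ≤ Real.sqrt ((‖x‖ * ‖a‖) ^ 2) :=
        Real.sqrt_le_sqrt h1
    _ = ‖x‖ * ‖a‖ := Real.sqrt_sq (by positivity)

omit [StarOrderedRing B] in
lemma aux_continuous_opsmul (x : E) : Continuous (fun a : B => x <• a) := by
  refine (LipschitzWith.of_dist_le_mul (K := ‖x‖₊) fun a a' => ?_).continuous
  rw [dist_eq_norm, dist_eq_norm, ← aux_opsmul_sub]
  simpa using aux_norm_opsmul_le x (a - a')

end AuxOpSmul

/-- The polynomial functions used in the approximation argument. -/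
noncomputable def auxg (M : ℝ) (n : ℕ) (t : ℝ) : ℝ := 1 - (1 - t / M) ^ n

lemma auxg_cont (M : ℝ) (n : ℕ) : Continuous (auxg M n) := by
  unfold auxg; fun_prop

lemma auxg_zero (M : ℝ) (n : ℕ) : auxg M n 0 = 0 := by simp [auxg]

lemma auxg_zero_fun (M : ℝ) : auxg M 0 = fun _ : ℝ => (0 : ℝ) := by
  funext t; simp [auxg]

lemma auxg_succ (M : ℝ) (hM : M ≠ 0) (n : ℕ) (t : ℝ) :
    auxg M n t + M⁻¹ * (t - t * auxg M n t) = auxg M (n + 1) t := by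
  unfold auxg
  have key : M⁻¹ * t = 1 - (1 - t / M) := by rw [sub_sub_cancel, div_eq_inv_mul]
  have h1 : t - t * (1 - (1 - t / M) ^ n) = t * (1 - t / M) ^ n := by ring
  rw [h1, ← mul_assoc, key]
  ring

lemma auxg_val (M : ℝ) (n : ℕ) (t : ℝ) :
    t - t * auxg M n t - auxg M n t * t + auxg M n t * (t * auxg M n t)
      = t * ((1 - t / M) ^ n) ^ 2 := by
  unfold auxg; ring

/-- The key approximation lemma: there is a sequence `aa` built by an explicit recursion
from `c := b * star b` such that `aa n * b → b`. -/
lemma aux_approx {B : Type*} [NonUnitalCStarAlgebra B] [PartialOrder B] [StarOrderedRing B]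
    (b : B) :
    ∃ aa : ℕ → B, aa 0 = 0 ∧
      (∀ n, aa (n + 1)
        = aa n + (‖b * star b‖ + 1)⁻¹ • (b * star b - b * star b * aa n)) ∧
      Filter.Tendsto (fun n => aa n * b) Filter.atTop (nhds b) := by
  set c : B := b * star b with hc
  have hcsa : IsSelfAdjoint c := IsSelfAdjoint.mul_star_self b
  have hcpos : (0 : B) ≤ c := mul_star_self_nonneg b
  set M : ℝ := ‖c‖ + 1 with hM
  have hMpos : (0 : ℝ) < M := by positivity
  have hM0 : M ≠ 0 := ne_of_gt hMpos
  set s : Set ℝ := quasispectrum ℝ c with hs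
  have hgc : ∀ n, ContinuousOn (auxg M n) s := fun n => (auxg_cont M n).continuousOn
  have hidc : ContinuousOn (fun t : ℝ => t) s := continuousOn_id
  have hmulc : ∀ n, ContinuousOn (fun t => t * auxg M n t) s :=
    fun n => (continuous_id.mul (auxg_cont M n)).continuousOn
  have hsubc : ∀ n, ContinuousOn (fun t => t - t * auxg M n t) s :=
    fun n => (continuous_id.sub (continuous_id.mul (auxg_cont M n))).continuousOn
  refine ⟨fun n => cfcₙ (auxg M n) c, ?_, ?_, ?_⟩
  · show cfcₙ (auxg M 0) c = 0
    rw [auxg_zero_fun M]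
    exact cfcₙ_const_zero ℝ c
  · intro n
    show cfcₙ (auxg M (n + 1)) c
      = cfcₙ (auxg M n) c + M⁻¹ • (c - c * cfcₙ (auxg M n) c)
    have e1 : c * cfcₙ (auxg M n) c = cfcₙ (fun t : ℝ => t * auxg M n t) c := by
      rw [cfcₙ_mul (fun t : ℝ => t) (auxg M n) c hidc rfl (hgc n) (auxg_zero M n),
        cfcₙ_id' ℝ c hcsa]
    have e2 : c - c * cfcₙ (auxg M n) c = cfcₙ (fun t : ℝ => t - t * auxg M n t) c := by
      rw [cfcₙ_sub (fun t : ℝ => t) (fun t => t * auxg M n t) c hidc rfl (hmulc n)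
        (by simp), cfcₙ_id' ℝ c hcsa, e1]
    have e3 : M⁻¹ • (c - c * cfcₙ (auxg M n) c)
        = cfcₙ (fun t : ℝ => M⁻¹ • (t - t * auxg M n t)) c := by
      rw [cfcₙ_smul M⁻¹ (fun t : ℝ => t - t * auxg M n t) c (hsubc n) (by simp), ← e2]
    have e4 : cfcₙ (auxg M n) c + M⁻¹ • (c - c * cfcₙ (auxg M n) c)
        = cfcₙ (fun t : ℝ => auxg M n t + M⁻¹ • (t - t * auxg M n t)) c := by
      rw [cfcₙ_add (auxg M n) (fun t : ℝ => M⁻¹ • (t - t * auxg M n t)) c (hgc n)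
        (auxg_zero M n) ((hsubc n).const_smul M⁻¹) (by simp), ← e3]
    rw [e4]
    exact cfcₙ_congr fun t _ => (auxg_succ M hM0 n t).symm
  · -- convergence
    have hsa_aa : ∀ n, star (cfcₙ (auxg M n) c) = cfcₙ (auxg M n) c := fun n =>
      (cfcₙ_predicate (auxg M n) c : IsSelfAdjoint _)
    have hexpand : ∀ n, (b - cfcₙ (auxg M n) c * b) * star (b - cfcₙ (auxg M n) c * b)
        = cfcₙ (fun t : ℝ => t - t * auxg M n t - auxg M n t * t
            + auxg M n t * (t * auxg M n t)) c := by
      intro n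
      have expand : (b - cfcₙ (auxg M n) c * b) * star (b - cfcₙ (auxg M n) c * b)
          = c - c * cfcₙ (auxg M n) c - cfcₙ (auxg M n) c * c
            + cfcₙ (auxg M n) c * (c * cfcₙ (auxg M n) c) := by
        rw [star_sub, star_mul, hsa_aa, hc]
        noncomm_ring
      rw [expand]
      have e1 : c * cfcₙ (auxg M n) c = cfcₙ (fun t : ℝ => t * auxg M n t) c := by
        rw [cfcₙ_mul (fun t : ℝ => t) (auxg M n) c hidc rfl (hgc n) (auxg_zero M n),
          cfcₙ_id' ℝ c hcsa]
      have e2 : cfcₙ (auxg M n) c * c = cfcₙ (fun t : ℝ => auxg M n t * t) c := by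
        rw [cfcₙ_mul (auxg M n) (fun t : ℝ => t) c (hgc n) (auxg_zero M n) hidc rfl,
          cfcₙ_id' ℝ c hcsa]
      have e3 : cfcₙ (auxg M n) c * (c * cfcₙ (auxg M n) c)
          = cfcₙ (fun t : ℝ => auxg M n t * (t * auxg M n t)) c := by
        rw [cfcₙ_mul (auxg M n) (fun t : ℝ => t * auxg M n t) c (hgc n) (auxg_zero M n)
          (hmulc n) (by simp), e1]
      rw [cfcₙ_add (fun t : ℝ => t - t * auxg M n t - auxg M n t * t)
          (fun t => auxg M n t * (t * auxg M n t)) c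
          ((hsubc n).sub ((auxg_cont M n).continuousOn.mul hidc)) (by simp [auxg_zero])
          ((auxg_cont M n).continuousOn.mul (hmulc n)) (by simp [auxg_zero]),
        cfcₙ_sub (fun t : ℝ => t - t * auxg M n t) (fun t => auxg M n t * t) c
          (hsubc n) (by simp) ((auxg_cont M n).continuousOn.mul hidc) (by simp [auxg_zero]),
        cfcₙ_sub (fun t : ℝ => t) (fun t => t * auxg M n t) c hidc rfl (hmulc n) (by simp),
        cfcₙ_id' ℝ c hcsa, ← e1, ← e2, ← e3]
    have hspec : ∀ t ∈ s, 0 ≤ t ∧ t ≤ ‖c‖ := by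
      intro t ht
      have h0t : 0 ≤ t := quasispectrum_nonneg_of_nonneg c hcpos t ht
      refine ⟨h0t, ?_⟩
      have htn : t.toNNReal ∈ quasispectrum ℝ≥0 c := by
        rw [← quasispectrum.preimage_algebraMap ℝ]
        simpa [Real.coe_toNNReal t h0t] using ht
      have hle := CStarAlgebra.le_nnnorm_of_mem_quasispectrum htn
      calc t = (t.toNNReal : ℝ) := (Real.coe_toNNReal t h0t).symm
        _ ≤ (‖c‖₊ : ℝ) := by exact_mod_cast hle
        _ = ‖c‖ := rfl
    have hbnd : ∀ n : ℕ, ‖b - cfcₙ (auxg M (n + 1)) c * b‖ ^ 2 ≤ M / (n + 1) := by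
      intro n
      have hsq : ‖b - cfcₙ (auxg M (n + 1)) c * b‖ ^ 2
          = ‖(b - cfcₙ (auxg M (n + 1)) c * b) * star (b - cfcₙ (auxg M (n + 1)) c * b)‖ := by
        rw [CStarRing.norm_self_mul_star, sq]
      rw [hsq, hexpand (n + 1)]
      apply norm_cfcₙ_le
      intro t ht
      obtain ⟨h0t, htc⟩ := hspec t ht
      have htM : t / M ≤ 1 := (div_le_one hMpos).2 (by rw [hM]; linarith)
      have hsge : 0 ≤ t / M := by positivity
      have hu0 : (0 : ℝ) ≤ 1 - t / M := by linarith
      have hu1 : 1 - t / M ≤ 1 := by linarith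
      rw [auxg_val, Real.norm_eq_abs, abs_of_nonneg (by positivity)]
      have hupow0 : 0 ≤ (1 - t / M) ^ (n + 1) := pow_nonneg hu0 _
      have hupow1 : (1 - t / M) ^ (n + 1) ≤ 1 := pow_le_one₀ hu0 hu1
      have step1 : t * ((1 - t / M) ^ (n + 1)) ^ 2 ≤ t * (1 - t / M) ^ (n + 1) := by
        rw [sq]
        calc t * ((1 - t / M) ^ (n + 1) * (1 - t / M) ^ (n + 1))
            ≤ t * (1 * (1 - t / M) ^ (n + 1)) := by
              exact mul_le_mul_of_nonneg_left
                (mul_le_mul_of_nonneg_right hupow1 hupow0) h0t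
          _ = t * (1 - t / M) ^ (n + 1) := by ring
      refine step1.trans ?_
      have hbern : 1 + ((n : ℝ) + 1) * (t / M) ≤ (1 + t / M) ^ (n + 1) := by
        have := one_add_mul_le_pow (by linarith : (-2 : ℝ) ≤ t / M) (n + 1)
        push_cast at this ⊢
        linarith
      have hkey : (1 + ((n : ℝ) + 1) * (t / M)) * (1 - t / M) ^ (n + 1) ≤ 1 := by
        calc (1 + ((n : ℝ) + 1) * (t / M)) * (1 - t / M) ^ (n + 1)
            ≤ (1 + t / M) ^ (n + 1) * (1 - t / M) ^ (n + 1) :=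
              mul_le_mul_of_nonneg_right hbern hupow0
          _ = ((1 + t / M) * (1 - t / M)) ^ (n + 1) := (mul_pow _ _ _).symm
          _ = (1 - (t / M) ^ 2) ^ (n + 1) := by ring_nf
          _ ≤ 1 := pow_le_one₀ (by nlinarith) (by nlinarith)
      rw [le_div_iff₀ (by positivity : (0 : ℝ) < (n : ℝ) + 1)]
      have hM1 : M * ((1 + ((n : ℝ) + 1) * (t / M)) * (1 - t / M) ^ (n + 1))
          = M * (1 - t / M) ^ (n + 1) + ((n : ℝ) + 1) * (t * (1 - t / M) ^ (n + 1)) := by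
        field_simp
      have hM2 := mul_le_mul_of_nonneg_left hkey hMpos.le
      have hM3 : 0 ≤ M * (1 - t / M) ^ (n + 1) := mul_nonneg hMpos.le hupow0
      linarith [hM1, hM2, hM3]
    have hnorm_tendsto : Filter.Tendsto (fun n : ℕ => ‖b - cfcₙ (auxg M (n + 1)) c * b‖)
        Filter.atTop (nhds 0) := by
      have hsqrt : Filter.Tendsto (fun n : ℕ => Real.sqrt (M / (n + 1)))
          Filter.atTop (nhds 0) := by
        have hdiv : Filter.Tendsto (fun n : ℕ => M / ((n : ℝ) + 1))
            Filter.atTop (nhds 0) := by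
          have h := (tendsto_const_div_atTop_nhds_zero_nat M).comp
            (Filter.tendsto_add_atTop_nat 1)
          have heq : ((fun n : ℕ => M / (n : ℝ)) ∘ fun a => a + 1)
              = fun n : ℕ => M / ((n : ℝ) + 1) := by
            funext n
            simp only [Function.comp_apply]
            push_cast
            ring
          rwa [heq] at h
        have h := (Real.continuous_sqrt.tendsto 0).comp hdiv
        simpa [Real.sqrt_zero, Function.comp_def] using h
      refine squeeze_zero (fun n => norm_nonneg _) (fun n => ?_) hsqrt
      calc ‖b - cfcₙ (auxg M (n + 1)) c * b‖
          = Real.sqrt (‖b - cfcₙ (auxg M (n + 1)) c * b‖ ^ 2) :=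
            (Real.sqrt_sq (norm_nonneg _)).symm
        _ ≤ Real.sqrt (M / (n + 1)) := Real.sqrt_le_sqrt (hbnd n)
    rw [← Filter.tendsto_add_atTop_iff_nat 1]
    rw [tendsto_iff_norm_sub_tendsto_zero]
    simpa [norm_sub_rev] using hnorm_tendsto

set_option maxHeartbeats 800000 in
/-- a closed linear subspace `K` with `E⟨E,K⟩ ⊆ K` and `K⟨E,E⟩ ⊆ K` is a
ternary ideal, i.e. `E⟨K,E⟩ ⊆ K`. -/
theorem isTernaryIdeal_of_two_conditions
    {B : Type*} [NonUnitalCStarAlgebra B] [PartialOrder B] [StarOrderedRing B]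
    {E : Type*} [NormedAddCommGroup E] [NormedSpace ℂ E] [SMul Bᵐᵒᵖ E]
    [CStarModuleRight B E] [CompleteSpace E] (K : Set E) (hcl : IsClosed K) (hsub : IsLinearSubspace K)
    (h1 : ∀ (x y : E), ∀ k ∈ K, x <• (inner B y k : B) ∈ K)
    (h2 : ∀ (x y : E), ∀ k ∈ K, k <• (inner B x y : B) ∈ K) :
    ∀ (x y : E), ∀ k ∈ K, x <• (inner B k y : B) ∈ K := by
  obtain ⟨hK0, hKadd, hKsmul⟩ := hsub
  have hKsub : ∀ u ∈ K, ∀ v ∈ K, u - v ∈ K := by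
    intro u hu v hv
    have := hKadd u hu _ (hKsmul (-1) v hv)
    simpa [sub_eq_add_neg] using this
  have hKr : ∀ (r : ℝ), ∀ v ∈ K, r • v ∈ K := by
    intro r v hv
    have := hKsmul (r : ℂ) v hv
    rwa [Complex.coe_smul] at this
  intro x y k hk
  set b : B := inner B k y with hb
  set w : E := y <• (inner B y k : B) with hw
  set c : B := b * star b with hc
  have hbw : (inner B w k : B) = c := by
    rw [hw, CStarModuleRight.inner_op_smul_left, hc, hb]
    simp only [CStarModuleRight.star_inner]
  obtain ⟨aa, haa0, haasucc, hlim⟩ := aux_approx b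
  set M : ℝ := ‖b * star b‖ + 1 with hM
  -- membership
  have hkc : ∀ k' ∈ K, k' <• c ∈ K := by
    intro k' hk'
    have := h2 w k k' hk'
    rwa [hbw] at this
  have main : ∀ n, (∀ k' ∈ K, k' <• (aa n * b) ∈ K) ∧ x <• (aa n * b) ∈ K := by
    intro n
    induction n with
    | zero =>
      rw [haa0, zero_mul]
      exact ⟨fun k' _ => by rw [aux_opsmul_zero]; exact hK0,
        by rw [aux_opsmul_zero]; exact hK0⟩
    | succ n ih =>
      have hx : aa (n + 1) * b = aa n * b + M⁻¹ • (c * b - c * (aa n * b)) := by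
        rw [haasucc n, ← hc, add_mul, smul_mul_assoc, sub_mul, mul_assoc c (aa n) b]
      constructor
      · intro k' hk'
        rw [hx, aux_opsmul_add, aux_opsmul_smul_real]
        refine hKadd _ (ih.1 k' hk') _ (hKr _ _ ?_)
        rw [aux_opsmul_sub]
        refine hKsub _ ?_ _ ?_
        · rw [aux_opsmul_mul, hb]
          exact h2 k y _ (hkc k' hk')
        · rw [aux_opsmul_mul]
          exact ih.1 _ (hkc k' hk')
      · rw [hx, aux_opsmul_add, aux_opsmul_smul_real]
        refine hKadd _ ih.2 _ (hKr _ _ ?_)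
        rw [aux_opsmul_sub]
        refine hKsub _ ?_ _ ?_
        · have hcb : c * b = (inner B w (k <• b) : B) := by
            rw [CStarModuleRight.inner_op_smul_right, hbw]
          rw [hcb]
          refine h1 x w _ ?_
          rw [hb]
          exact h2 k y k hk
        · have hcb : c * (aa n * b) = (inner B w (k <• (aa n * b)) : B) := by
            rw [CStarModuleRight.inner_op_smul_right, hbw]
          rw [hcb]
          exact h1 x w _ (ih.1 k hk)
  have hlim2 : Filter.Tendsto (fun n : ℕ => x <• (aa n * b)) Filter.atTop
      (nhds (x <• b)) :=
    ((aux_continuous_opsmul x).tendsto b).comp hlim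
  have hmem : x <• b ∈ K :=
    hcl.mem_of_tendsto hlim2 (Filter.Eventually.of_forall fun n => (main n).2)
  rwa [hb] at hmem
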